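/- Let 𝔗 be a maximal collection of pairwise non-crossing arcs with a fountain at n. Then an arc (p,q) with p < n < q crosses infinitely many arcs of 𝔗. -/
import Mathlib


def IsArc (a : ℤ × ℤ) : Prop := a.1 ≤ a.2 - 2

def Cross (a b : ℤ × ℤ) : Prop :=
  (a.1 < b.1 ∧ b.1 < a.2 ∧ a.2 < b.2) ∨ (b.1 < a.1 ∧ a.1 < b.2 ∧ b.2 < a.2)

/-- If 𝔗 is a maximal collection of pairwise non-crossing arcs with a fountain at `n`,
then an arc `(p,q)` with `p < n < q` crosses infinitely many arcs of 𝔗. -/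
theorem arc_over_fountain_crosses_infinitely_many
    (T : Set (ℤ × ℤ)) (n : ℤ)
    (harc : ∀ a ∈ T, IsArc a)
    (hnc : ∀ a ∈ T, ∀ b ∈ T, ¬ Cross a b)
    (hmax : ∀ d : ℤ × ℤ, IsArc d → d ∉ T → ∃ t ∈ T, Cross d t ∨ Cross t d)
    (hfountain₁ : {m : ℤ | (m, n) ∈ T}.Infinite)
    (hfountain₂ : {p : ℤ | (n, p) ∈ T}.Infinite)
    (p q : ℤ) (hpq : IsArc (p, q)) (h₁ : p < n) (h₂ : n < q) :
    {t ∈ T | Cross (p, q) t ∨ Cross t (p, q)}.Infinite := by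
  have hfin : ({m : ℤ | (m, n) ∈ T} ∩ Set.Ici p).Finite := by
    apply (Set.finite_Icc p (n - 2)).subset
    rintro m ⟨hm, hp⟩
    exact ⟨hp, by have := harc (m, n) hm; simpa [IsArc] using this⟩
  have hinf : ({m : ℤ | (m, n) ∈ T} \ Set.Ici p).Infinite :=
    (hfountain₁.diff hfin).mono (fun x hx => ⟨hx.1, fun h => hx.2 ⟨hx.1, h⟩⟩)
  have himg : ((fun m => ((m, n) : ℤ × ℤ)) '' ({m : ℤ | (m, n) ∈ T} \ Set.Ici p)).Infinite :=
    hinf.image (fun a _ b _ h => congrArg Prod.fst h)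
  apply himg.mono
  rintro t ⟨m, ⟨hmT, hmp⟩, rfl⟩
  have hmp' : m < p := lt_of_not_ge hmp
  exact ⟨hmT, Or.inr (Or.inl ⟨hmp', h₁, h₂⟩)⟩
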